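/- Let P_j denote the Legendre polynomials. There exists a constant K > 0, independent of j and y, such that for all j ≥ 1 and all y ∈ (−1,1), |P_j(y)| < K / (√(j+1) · (1−y²)^{1/4}). -/

import Mathlib

open Polynomial

/-- The `n`-th Legendre polynomial, via the Rodrigues formula. -/
noncomputable def legendre (n : ℕ) : Polynomial ℝ :=
  Polynomial.C (1 / (2 ^ n * (n.factorial : ℝ))) *
    (Polynomial.derivative^[n] ((Polynomial.X ^ 2 - 1) ^ n))

lemma iterA (r : Polynomial ℝ) (k : ℕ) :
    derivative^[k+2] ((X^2 - 1) * r) =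
      (X^2 - 1) * derivative^[k+2] r + C (2*(k+2) : ℝ) * X * derivative^[k+1] r
        + C ((k+2)*(k+1) : ℝ) * derivative^[k] r := by
  induction k with
  | zero =>
    simp only [Function.iterate_succ_apply, Function.iterate_zero_apply]
    simp only [derivative_mul, derivative_add, derivative_sub, derivative_pow, derivative_X,
      derivative_one, derivative_C, derivative_ofNat, map_zero, map_one]
    push_cast
    simp only [C_add, C_mul, map_ofNat, C_1, map_zero]
    ring
  | succ k ih =>
    rw [Function.iterate_succ_apply', ih]
    simp only [derivative_add, derivative_mul, derivative_sub, derivative_pow, derivative_X,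
      derivative_one, derivative_C, derivative_ofNat, map_zero, map_one,
      Function.iterate_succ_apply']
    push_cast
    simp only [C_add, C_mul, map_ofNat, C_1, map_zero]
    ring

lemma iterB (r : Polynomial ℝ) (k : ℕ) :
    derivative^[k+1] (X * r) = X * derivative^[k+1] r + C ((k+1) : ℝ) * derivative^[k] r := by
  induction k with
  | zero => simp [derivative_mul]; ring
  | succ k ih =>
    rw [Function.iterate_succ_apply', ih]
    simp only [derivative_add, derivative_mul, derivative_X, derivative_C, derivative_one,
      map_zero, map_one, Function.iterate_succ_apply']
    push_cast
    simp only [C_add, C_1, map_zero]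
    ring

lemma key_iter (m : ℕ) :
    (X^2 - 1) * derivative^[m+3] ((X^2-1)^(m+1)) + C 2 * X * derivative^[m+2] ((X^2-1)^(m+1))
      = C (((m+1)*(m+2) : ℝ)) * derivative^[m+1] ((X^2-1)^(m+1)) := by
  set q : Polynomial ℝ := (X^2-1)^(m+1) with hq
  have step1 : (X^2 - 1) * derivative q = C (2*(m+1) : ℝ) * (X * q) := by
    rw [hq, derivative_pow]
    simp only [derivative_sub, derivative_pow, derivative_X, derivative_one]
    push_cast
    simp only [C_add, C_mul, map_ofNat, C_1, Nat.add_sub_cancel]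
    ring
  have step2 := congrArg (derivative^[m+2]) step1
  rw [iterA (derivative q) m] at step2
  have hC : ∀ (a : ℝ) (p : Polynomial ℝ) (j : ℕ),
      derivative^[j] (C a * p) = C a * derivative^[j] p := by
    intro a p j
    induction j generalizing p with
    | zero => simp
    | succ j ih =>
      rw [Function.iterate_succ_apply, derivative_C_mul, ih, ← Function.iterate_succ_apply]
  rw [hC] at step2
  rw [iterB q (m+1)] at step2
  have e1 : ∀ j : ℕ, derivative^[j] (derivative q) = derivative^[j+1] q := by
    intro j; rw [Function.iterate_succ_apply]
  rw [e1, e1, e1] at step2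
  push_cast at step2 ⊢
  simp only [C_add, C_mul, map_ofNat, C_1] at step2 ⊢
  have h23 : ((m:ℝ[X]) + 2 + 1) = (m + 3) := by ring
  linear_combination step2

lemma legendre_ode (n : ℕ) (hn : 1 ≤ n) :
    (X^2 - 1) * derivative (derivative (legendre n)) + C 2 * X * derivative (legendre n)
      = C ((n*(n+1) : ℝ)) * legendre n := by
  obtain ⟨m, rfl⟩ := Nat.exists_eq_add_of_le hn
  have h := key_iter m
  unfold legendre
  rw [derivative_C_mul, derivative_C_mul]
  simp only [Nat.add_comm 1 m]
  have e2 : derivative (derivative (derivative^[m+1] (((X:ℝ[X])^2-1)^(m+1))))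
      = derivative^[m+3] (((X:ℝ[X])^2-1)^(m+1)) := by
    simp [Function.iterate_succ_apply']
  have e3 : derivative (derivative^[m+1] (((X:ℝ[X])^2-1)^(m+1)))
      = derivative^[m+2] (((X:ℝ[X])^2-1)^(m+1)) := by
    simp [Function.iterate_succ_apply']
  rw [e2, e3]
  push_cast at h ⊢
  simp only [C_add, C_mul, map_ofNat, C_1] at h ⊢
  linear_combination (C (1 / (2 ^ (m+1) * ((m+1).factorial : ℝ)))) * h

lemma q_expand (n : ℕ) : ((X:ℝ[X])^2 - 1)^n
    = ∑ k ∈ Finset.range (n+1), C ((-1:ℝ)^(n-k) * (n.choose k)) * X^(2*k) := by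
  have : ((X:ℝ[X])^2 - 1) = X^2 + C (-1) := by simp [sub_eq_add_neg]
  rw [this, add_pow]
  refine Finset.sum_congr rfl fun k hk => ?_
  rw [← C_pow, ← pow_mul, C_mul, C_eq_natCast]
  ring

lemma q_coeff_even (n j : ℕ) :
    (((X:ℝ[X])^2 - 1)^n).coeff (2*j) = (-1:ℝ)^(n-j) * (n.choose j) := by
  rw [q_expand, finset_sum_coeff]
  simp only [coeff_C_mul, coeff_X_pow]
  rcases le_or_gt j n with h | h
  · rw [Finset.sum_eq_single j]
    · simp
    · intro b _ hb
      simp [Nat.mul_left_cancel_iff, hb, Ne.symm hb]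
    · intro hj; exact absurd (Finset.mem_range.2 (Nat.lt_succ_of_le h)) hj
  · rw [Finset.sum_eq_zero, Nat.choose_eq_zero_of_lt h]
    · simp
    · intro b hb
      have : b ≠ j := by rw [Finset.mem_range] at hb; omega
      simp [this, Ne.symm this]

lemma q_coeff_odd (n j : ℕ) :
    (((X:ℝ[X])^2 - 1)^n).coeff (2*j+1) = 0 := by
  rw [q_expand, finset_sum_coeff]
  refine Finset.sum_eq_zero fun b _ => ?_
  have h2 : 2*j+1 ≠ 2*b := by omega
  rw [coeff_C_mul, coeff_X_pow, if_neg h2, mul_zero]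

lemma cb_sq (m : ℕ) : (m+1) * (Nat.centralBinom m)^2 ≤ 16^m := by
  induction m with
  | zero => simp [Nat.centralBinom]
  | succ m ih =>
    have h1 : (m+1) * Nat.centralBinom (m+1) = 2 * (2*m+1) * Nat.centralBinom m :=
      Nat.succ_mul_centralBinom_succ m
    have key : (m+1)^2 * ((m+2) * (Nat.centralBinom (m+1))^2)
        ≤ (m+1)^2 * 16^(m+1) := by
      have e : (m+1)^2 * ((m+2) * (Nat.centralBinom (m+1))^2)
          = (m+2) * ((m+1) * Nat.centralBinom (m+1))^2 := by ring
      rw [e, h1]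
      have : (m+2) * (2*(2*m+1) * Nat.centralBinom m)^2
          = (4*(2*m+1)^2*(m+2)) * (Nat.centralBinom m)^2 := by ring
      rw [this]
      calc (4*(2*m+1)^2*(m+2)) * (Nat.centralBinom m)^2
          ≤ (16*(m+1)^2) * ((m+1) * (Nat.centralBinom m)^2) := by
            have : 4*(2*m+1)^2*(m+2) ≤ 16*(m+1)^2*(m+1) := by nlinarith
            nlinarith [sq_nonneg (Nat.centralBinom m)]
        _ ≤ (16*(m+1)^2) * 16^m := by
            exact Nat.mul_le_mul_left _ ih
        _ = (m+1)^2 * 16^(m+1) := by ring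
    exact Nat.le_of_mul_le_mul_left key (by positivity)

lemma legendre_eval_zero_even (m : ℕ) :
    (legendre (2*m)).eval 0 = (-1:ℝ)^m * (Nat.centralBinom m) / 4^m := by
  unfold legendre
  rw [eval_mul, eval_C, ← coeff_zero_eq_eval_zero, Polynomial.coeff_iterate_derivative]
  simp only [zero_add, Nat.descFactorial_self, q_coeff_even, smul_eq_mul, nsmul_eq_mul]
  rw [Nat.centralBinom]
  have h1 : (2*m) - m = m := by omega
  rw [h1]
  have h2 : ((2*m).factorial : ℝ) ≠ 0 := Nat.cast_ne_zero.2 (Nat.factorial_ne_zero _)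
  have h4 : ((2:ℝ))^(2*m) = 4^m := by rw [pow_mul]; norm_num
  field_simp
  rw [h4]
  ring

lemma legendre_eval_zero_odd (m : ℕ) : (legendre (2*m+1)).eval 0 = 0 := by
  unfold legendre
  rw [eval_mul, eval_C, ← coeff_zero_eq_eval_zero, Polynomial.coeff_iterate_derivative]
  simp only [zero_add, q_coeff_odd, smul_zero, mul_zero]

lemma legendre_deriv_eq (n : ℕ) : derivative (legendre n)
    = C (1 / (2 ^ n * (n.factorial : ℝ))) * derivative^[n+1] ((X^2-1)^n) := by
  unfold legendre
  rw [derivative_C_mul, Function.iterate_succ_apply']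

lemma legendre_deriv_eval_zero_even (m : ℕ) :
    (derivative (legendre (2*m))).eval 0 = 0 := by
  rw [legendre_deriv_eq, eval_mul, eval_C, ← coeff_zero_eq_eval_zero,
    Polynomial.coeff_iterate_derivative]
  simp only [zero_add, q_coeff_odd, smul_zero, mul_zero]

lemma legendre_deriv_eval_zero_odd (m : ℕ) :
    (derivative (legendre (2*m+1))).eval 0
      = (2*(m:ℝ)+2) * ((-1:ℝ)^m * ((2*m+1).choose (m+1))) / 2^(2*m+1) := by
  rw [legendre_deriv_eq, eval_mul, eval_C, ← coeff_zero_eq_eval_zero,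
    Polynomial.coeff_iterate_derivative]
  simp only [zero_add, Nat.descFactorial_self, smul_eq_mul, nsmul_eq_mul]
  have h0 : (2*m+1)+1 = 2*(m+1) := by ring
  rw [h0, q_coeff_even]
  have h1 : (2*m+1) - (m+1) = m := by omega
  rw [h1]
  have h2 : ((2*m+1).factorial : ℝ) ≠ 0 := Nat.cast_ne_zero.2 (Nat.factorial_ne_zero _)
  have h3 : ((2*(m+1)).factorial : ℝ) = (2*m+2) * (2*m+1).factorial := by
    have : 2*(m+1) = (2*m+1)+1 := by ring
    rw [this, Nat.factorial_succ]
    push_cast; ring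
  rw [h3]
  field_simp

lemma E0_le (n : ℕ) :
    (legendre n).eval 0 ^ 2 + 4 * ((derivative (legendre n)).eval 0)^2 / ((2*(n:ℝ)+1)^2+1)
      ≤ 4/((n:ℝ)+1) := by
  rcases Nat.even_or_odd n with ⟨m, hm⟩ | ⟨m, hm⟩
  · have hn : n = 2*m := by omega
    subst hn
    rw [legendre_eval_zero_even, legendre_deriv_eval_zero_even]
    have e1 : ((-1:ℝ)^m * (Nat.centralBinom m) / 4^m)^2
        = (Nat.centralBinom m : ℝ)^2 / 16^m := by
      rw [div_pow, mul_pow, ← pow_mul, ← pow_mul, mul_comm m 2, pow_mul, pow_mul]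
      norm_num
    rw [e1]
    have hcb : ((m:ℝ)+1) * (Nat.centralBinom m : ℝ)^2 ≤ 16^m := by
      exact_mod_cast cb_sq m
    have h16m : (0:ℝ) < 16^m := by positivity
    have h2 : (Nat.centralBinom m : ℝ)^2 / 16^m ≤ 1/((m:ℝ)+1) := by
      rw [div_le_div_iff₀ h16m (by positivity)]
      nlinarith
    have h3 : (1:ℝ)/((m:ℝ)+1) ≤ 4/(2*(m:ℝ)+1) := by
      rw [div_le_div_iff₀ (by positivity) (by positivity)]
      nlinarith
    push_cast
    norm_num
    linarith
  · have hn : n = 2*m+1 := by omega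
    subst hn
    rw [legendre_eval_zero_odd, legendre_deriv_eval_zero_odd]
    have e1 : ((2*(m:ℝ)+2) * ((-1:ℝ)^m * ((2*m+1).choose (m+1))) / 2^(2*m+1))^2
        = (2*(m:ℝ)+2)^2 * (((2*m+1).choose (m+1) : ℝ))^2 / (4 * 16^m) := by
      rw [div_pow, mul_pow, mul_pow, ← pow_mul, ← pow_mul, mul_comm m 2,
        show (2*m+1)*2 = 4*m+2 from by ring, pow_mul, pow_add, pow_mul]
      norm_num
      ring
    rw [e1]
    have hch : ((2*m+1).choose (m+1)) * 2 = Nat.centralBinom (m+1) := by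
      rw [Nat.centralBinom]
      have h0 : 2*(m+1) = (2*m+1)+1 := by ring
      rw [h0]
      conv_rhs => rw [Nat.choose_succ_succ]
      have h1 : (2*m+1).choose m = (2*m+1).choose (m+1) := by
        rw [← Nat.choose_symm (by omega : m+1 ≤ 2*m+1)]
        congr 1; omega
      simp only [Nat.succ_eq_add_one]
      omega
    have hcb : ((m:ℝ)+1+1) * (Nat.centralBinom (m+1) : ℝ)^2 ≤ 16^(m+1) := by
      exact_mod_cast cb_sq (m+1)
    have hch' : (((2*m+1).choose (m+1) : ℕ) : ℝ) = (Nat.centralBinom (m+1) : ℝ)/2 := by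
      field_simp
      exact_mod_cast hch
    rw [hch']
    set CB : ℝ := (Nat.centralBinom (m+1) : ℝ) with hCB
    have hCBnn : 0 ≤ CB := by rw [hCB]; positivity
    have h16m : (0:ℝ) < 16^m := by positivity
    have step : 8*((m:ℝ)+1)^3 * CB^2 ≤ 16 * 16^m * ((4*(m:ℝ)+3)^2+1) := by
      have h8 : 8*((m:ℝ)+1)^3 ≤ ((m:ℝ)+2) * ((4*(m:ℝ)+3)^2+1) := by nlinarith
      have hm2 : (0:ℝ) < (m:ℝ)+2 := by positivity
      have hpow : (16:ℝ)^(m+1) = 16 * 16^m := by rw [pow_succ]; ring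
      rw [hpow] at hcb
      have h1 : ((m:ℝ)+2) * (8*((m:ℝ)+1)^3 * CB^2)
          ≤ ((m:ℝ)+2) * (16 * 16^m * ((4*(m:ℝ)+3)^2+1)) := by
        calc ((m:ℝ)+2) * (8*((m:ℝ)+1)^3 * CB^2)
            = (8*((m:ℝ)+1)^3) * (((m:ℝ)+1+1) * CB^2) := by ring
          _ ≤ (8*((m:ℝ)+1)^3) * (16 * 16^m) := by
              apply mul_le_mul_of_nonneg_left hcb (by positivity)
          _ ≤ (((m:ℝ)+2) * ((4*(m:ℝ)+3)^2+1)) * (16 * 16^m) := by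
              apply mul_le_mul_of_nonneg_right h8 (by positivity)
          _ = ((m:ℝ)+2) * (16 * 16^m * ((4*(m:ℝ)+3)^2+1)) := by ring
      exact le_of_mul_le_mul_left h1 hm2
    push_cast
    rw [zero_pow (by norm_num), zero_add]
    have hd1 : ((2*(2*(m:ℝ)+1)+1)^2+1) ≠ 0 := by positivity
    have hd2 : (2*(m:ℝ)+1+1) ≠ 0 := by positivity
    have hd3 : (16:ℝ)^m ≠ 0 := ne_of_gt h16m
    have expand : 4 * ((2*(m:ℝ)+2)^2*(CB/2)^2/(4*16^m)) / ((2*(2*(m:ℝ)+1)+1)^2+1)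
        = (8*((m:ℝ)+1)^3*CB^2) / (16*16^m*((4*(m:ℝ)+3)^2+1)) * (4/(2*(m:ℝ)+1+1)) := by
      have hD : ((2*(2*(m:ℝ)+1)+1)^2+1) = ((4*(m:ℝ)+3)^2+1) := by ring
      field_simp
      ring
    rw [expand]
    have hle1 : (8*((m:ℝ)+1)^3*CB^2) / (16*16^m*((4*(m:ℝ)+3)^2+1)) ≤ 1 :=
      (div_le_one (by positivity)).2 step
    calc (8*((m:ℝ)+1)^3*CB^2) / (16*16^m*((4*(m:ℝ)+3)^2+1)) * (4/(2*(m:ℝ)+1+1))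
        ≤ 1 * (4/(2*(m:ℝ)+1+1)) := by
          apply mul_le_mul_of_nonneg_right hle1 (by positivity)
      _ = 4/(2*(m:ℝ)+1+1) := one_mul _

lemma alg (lam t p p1 a dd s : ℝ) (ha : a = t*p - 2*(1-t^2)*p1)
    (hdd : dd = (4*lam+1)*(1-t^2)+1) (hd0 : dd ≠ 0) (hs : s*s = 1-t^2) (hs0 : s ≠ 0) :
    (-(2*t)/(2*s)) * (p^2 + a^2/dd)
      + s * (2*p*p1 + (2*a*((2*lam+1)*p + t*p1)*dd - a^2*((4*lam+1)*(-(2*t))))/dd^2)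
    = -(2*t)*a^2/(dd^2*s) := by
  have e : s * (2*p*p1 + (2*a*((2*lam+1)*p + t*p1)*dd - a^2*((4*lam+1)*(-(2*t))))/dd^2)
      = ((1-t^2) * (2*p*p1 + (2*a*((2*lam+1)*p + t*p1)*dd - a^2*((4*lam+1)*(-(2*t))))/dd^2))/s := by
    rw [eq_div_iff hs0]
    linear_combination (2*p*p1 + (2*a*((2*lam+1)*p + t*p1)*dd - a^2*((4*lam+1)*(-(2*t))))/dd^2) * hs
  rw [e]
  subst ha
  field_simp
  subst hdd
  ring

lemma bernstein2 (n : ℕ) (hn : 1 ≤ n) (y : ℝ) (hy : y ∈ Set.Ioo (-1:ℝ) 1) :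
    Real.sqrt (1-y^2) * ((legendre n).eval y)^2 ≤ 4/((n:ℝ)+1) := by
  obtain ⟨hy1, hy2⟩ := hy
  set lam : ℝ := (n:ℝ)*((n:ℝ)+1) with hlam
  have hlam0 : 0 ≤ lam := by positivity
  set P : ℝ[X] := legendre n with hP
  set P1 : ℝ[X] := derivative P with hP1
  have hODE : (X^2 - 1) * derivative P1 + C 2 * X * P1 = C lam * P := by
    rw [hP1, hP, hlam]; exact_mod_cast legendre_ode n hn
  set Ap : ℝ[X] := X * P - C 2 * (1 - X^2) * P1 with hAp
  have hA' : derivative Ap = C (2*lam+1) * P + X * P1 := by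
    rw [hAp]
    simp only [derivative_sub, derivative_mul, derivative_X, derivative_one, derivative_C,
      derivative_pow, derivative_X_pow, derivative_ofNat, C_add, C_mul, map_ofNat, C_1,
      one_mul, mul_one, zero_mul, zero_sub, mul_zero, pow_one]
    push_cast
    linear_combination (2:ℝ[X]) * hODE
  set D : ℝ → ℝ := fun t => (4*lam+1)*(1-t^2)+1 with hD
  have hDpos : ∀ t : ℝ, t^2 ≤ 1 → 0 < D t := by
    intro t ht; rw [hD]; simp only; nlinarith
  set Qf : ℝ → ℝ := fun t => (P.eval t)^2 + (Ap.eval t)^2 / D t with hQf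
  set Ef : ℝ → ℝ := fun t => Real.sqrt (1-t^2) * Qf t with hEf
  set Q' : ℝ → ℝ := fun t => 2*P.eval t*P1.eval t +
      (2*Ap.eval t*((2*lam+1)*P.eval t + t*P1.eval t)*(D t)
        - (Ap.eval t)^2*((4*lam+1)*(-(2*t))))/(D t)^2 with hQ'
  have hQd : ∀ t : ℝ, t^2 ≤ 1 → HasDerivAt Qf (Q' t) t := by
    intro t ht
    have h1 : HasDerivAt (fun u : ℝ => (P.eval u)^2) (2*P.eval t*P1.eval t) t := by
      have h := (P.hasDerivAt t).mul (P.hasDerivAt t)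
      have e : P1.eval t * P.eval t + P.eval t * P1.eval t = 2*P.eval t*P1.eval t := by ring
      convert h using 1
      · rfl
      · rfl
      · ext u; simp [sq]
      · rw [← hP1]; ring
    have hA'eval : (derivative Ap).eval t = (2*lam+1)*P.eval t + t*P1.eval t := by
      rw [hA']; simp
    have h2 : HasDerivAt (fun u : ℝ => (Ap.eval u)^2)
        (2*Ap.eval t*((2*lam+1)*P.eval t + t*P1.eval t)) t := by
      have h := (Ap.hasDerivAt t).mul (Ap.hasDerivAt t)
      rw [hA'eval] at h
      have e : ((2*lam+1)*P.eval t + t*P1.eval t) * Ap.eval t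
          + Ap.eval t * ((2*lam+1)*P.eval t + t*P1.eval t)
          = 2*Ap.eval t*((2*lam+1)*P.eval t + t*P1.eval t) := by ring
      simpa [sq, e, Pi.mul_def] using h
    have h3 : HasDerivAt D ((4*lam+1)*(-(2*t))) t := by
      have hb : HasDerivAt (fun u : ℝ => 1 - u^2) (-(2*t)) t := by
        simpa using ((hasDerivAt_pow 2 t).const_sub 1)
      simpa [hD] using ((hb.const_mul (4*lam+1)).add_const 1)
    have h4 := h2.div h3 (ne_of_gt (hDpos t ht))
    exact h1.add h4
  have hsq : ∀ t : ℝ, t ∈ Set.Ioo (-1:ℝ) 1 → 0 < 1 - t^2 := by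
    intro t ht; nlinarith [ht.1, ht.2]
  have hEd : ∀ t : ℝ, t ∈ Set.Ioo (-1:ℝ) 1 →
      HasDerivAt Ef (-(2*t)*(Ap.eval t)^2/((D t)^2 * Real.sqrt (1-t^2))) t := by
    intro t ht
    have h1t : 0 < 1 - t^2 := hsq t ht
    have hs : 0 < Real.sqrt (1-t^2) := Real.sqrt_pos.2 h1t
    have hb : HasDerivAt (fun u : ℝ => 1 - u^2) (-(2*t)) t := by
      simpa using ((hasDerivAt_pow 2 t).const_sub 1)
    have hS : HasDerivAt (fun u : ℝ => Real.sqrt (1-u^2))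
        (-(2*t)/(2*Real.sqrt (1-t^2))) t := by
      have h := (Real.hasDerivAt_sqrt (ne_of_gt h1t)).comp t hb
      convert h using 1
      · rfl
      · rfl
      · rfl
      ring
    have hmul := hS.mul (hQd t (by nlinarith))
    convert hmul using 1
    · rfl
    · rfl
    · rfl
    have hAeval : Ap.eval t = t*P.eval t - 2*(1-t^2)*P1.eval t := by
      rw [hAp]; simp
    have hss : Real.sqrt (1-t^2) * Real.sqrt (1-t^2) = 1-t^2 :=
      Real.mul_self_sqrt h1t.le
    exact (alg lam t (P.eval t) (P1.eval t) (Ap.eval t) (D t) (Real.sqrt (1-t^2))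
      hAeval (by rw [hD]) (ne_of_gt (hDpos t (by nlinarith))) hss (ne_of_gt hs)).symm
  have hEderiv : ∀ t : ℝ, t ∈ Set.Ioo (-1:ℝ) 1 →
      deriv Ef t = -(2*t)*(Ap.eval t)^2/((D t)^2 * Real.sqrt (1-t^2)) := by
    intro t ht; exact (hEd t ht).deriv
  have hE0 : ∀ z ∈ Set.Ioo (-1:ℝ) 1, Ef z ≤ Ef 0 := by
    intro z hz
    rcases lt_trichotomy z 0 with hz0 | hz0 | hz0
    · have hsub : Set.Icc z (0:ℝ) ⊆ Set.Ioo (-1:ℝ) 1 := fun u hu =>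
        ⟨lt_of_lt_of_le hz.1 hu.1, lt_of_le_of_lt hu.2 one_pos⟩
      have hcont : ContinuousOn Ef (Set.Icc z 0) := fun u hu =>
        ((hEd u (hsub hu)).continuousAt).continuousWithinAt
      have hmono : MonotoneOn Ef (Set.Icc z 0) := by
        apply monotoneOn_of_deriv_nonneg (convex_Icc z 0) hcont
        · intro u hu
          rw [interior_Icc] at hu
          exact ((hEd u (hsub (Set.mem_Icc_of_Ioo hu))).differentiableAt).differentiableWithinAt
        · intro u hu
          rw [interior_Icc] at hu
          rw [hEderiv u (hsub (Set.mem_Icc_of_Ioo hu))]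
          apply div_nonneg
          · have : (0:ℝ) ≤ -(2*u) := by nlinarith [hu.2]
            exact mul_nonneg this (sq_nonneg _)
          · positivity
      exact hmono (Set.mem_Icc.2 ⟨le_refl z, hz0.le⟩) (Set.mem_Icc.2 ⟨hz0.le, le_refl 0⟩) hz0.le
    · rw [hz0]
    · have hsub : Set.Icc (0:ℝ) z ⊆ Set.Ioo (-1:ℝ) 1 := fun u hu =>
        ⟨lt_of_lt_of_le (by norm_num) hu.1, lt_of_le_of_lt hu.2 hz.2⟩
      have hcont : ContinuousOn Ef (Set.Icc 0 z) := fun u hu =>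
        ((hEd u (hsub hu)).continuousAt).continuousWithinAt
      have hanti : AntitoneOn Ef (Set.Icc 0 z) := by
        apply antitoneOn_of_deriv_nonpos (convex_Icc 0 z) hcont
        · intro u hu
          rw [interior_Icc] at hu
          exact ((hEd u (hsub (Set.mem_Icc_of_Ioo hu))).differentiableAt).differentiableWithinAt
        · intro u hu
          rw [interior_Icc] at hu
          rw [hEderiv u (hsub (Set.mem_Icc_of_Ioo hu))]
          apply div_nonpos_of_nonpos_of_nonneg
          · have h1 : -(2*u) ≤ 0 := by nlinarith [hu.1]
            exact mul_nonpos_of_nonpos_of_nonneg h1 (sq_nonneg _)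
          · positivity
      exact hanti (Set.mem_Icc.2 ⟨le_refl 0, hz0.le⟩) (Set.mem_Icc.2 ⟨hz0.le, le_refl z⟩) hz0.le
  have hy' : y ∈ Set.Ioo (-1:ℝ) 1 := ⟨hy1, hy2⟩
  have h1 : Real.sqrt (1-y^2) * ((legendre n).eval y)^2 ≤ Ef y := by
    rw [hEf]
    simp only
    have hle : (P.eval y)^2 ≤ Qf y := by
      rw [hQf]
      simp only
      have := div_nonneg (sq_nonneg (Ap.eval y)) (hDpos y (by nlinarith)).le
      linarith
    rw [hP] at hle
    exact mul_le_mul_of_nonneg_left hle (Real.sqrt_nonneg _)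
  have h2 : Ef 0 = ((legendre n).eval 0)^2
      + 4*((derivative (legendre n)).eval 0)^2/((2*(n:ℝ)+1)^2+1) := by
    rw [hEf, hQf, hD, hAp]
    simp only [eval_sub, eval_mul, eval_X, eval_C, eval_one, eval_pow, eval_add]
    norm_num
    rw [hP1, hP]
    have hden : (4*lam+1+1 : ℝ) = (2*(n:ℝ)+1)^2+1 := by
      rw [hlam]; push_cast; ring
    rw [hden]
    ring
  calc Real.sqrt (1-y^2) * ((legendre n).eval y)^2 ≤ Ef y := h1
    _ ≤ Ef 0 := hE0 y hy'
    _ = _ := h2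
    _ ≤ 4/((n:ℝ)+1) := E0_le n

theorem stmt_9 :
    ∃ K : ℝ, 0 < K ∧ ∀ j : ℕ, 1 ≤ j → ∀ y ∈ Set.Ioo (-1 : ℝ) 1,
      |(legendre j).eval y| < K / (Real.sqrt ((j : ℝ) + 1) * (1 - y ^ 2) ^ ((1 : ℝ) / 4)) := by
  refine ⟨3, by norm_num, fun j hj y hy => ?_⟩
  obtain ⟨hy1, hy2⟩ := hy
  have h1y : 0 < 1 - y^2 := by nlinarith
  set s4 : ℝ := (1 - y^2) ^ ((1:ℝ)/4) with hs4def
  set sj : ℝ := Real.sqrt ((j:ℝ)+1) with hsjdef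
  have hs4pos : 0 < s4 := Real.rpow_pos_of_pos h1y _
  have hsjpos : 0 < sj := Real.sqrt_pos.2 (by positivity)
  have hs4sq : s4^2 = Real.sqrt (1-y^2) := by
    rw [hs4def, ← Real.rpow_natCast ((1-y^2) ^ ((1:ℝ)/4)) 2, ← Real.rpow_mul h1y.le,
      Real.sqrt_eq_rpow]
    norm_num
  have hsjsq : sj^2 = (j:ℝ)+1 := Real.sq_sqrt (by positivity)
  have hb := bernstein2 j hj y ⟨hy1, hy2⟩
  set p : ℝ := (legendre j).eval y with hp
  have hx : (|p| * (sj * s4))^2 ≤ 4 := by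
    have e : (|p| * (sj * s4))^2 = (Real.sqrt (1-y^2) * p^2) * ((j:ℝ)+1) := by
      rw [mul_pow, mul_pow, hs4sq, hsjsq, sq_abs]; ring
    rw [e]
    have hjpos : (0:ℝ) < (j:ℝ)+1 := by positivity
    rw [← le_div_iff₀ hjpos]
    exact hb
  have hxnn : 0 ≤ |p| * (sj * s4) := by positivity
  have hx2 : |p| * (sj * s4) ≤ 2 := by nlinarith
  rw [lt_div_iff₀ (by positivity)]
  calc |p| * (sj * s4) ≤ 2 := hx2
    _ < 3 := by norm_num
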